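/- For every ρ > 0 and every D ≥ 0 there exists ε̃ ∈ (0, 1/2] such that the following holds. Let I be a finite nonempty index set, let w : I → ℝ with w_i > 0 and Σ_i w_i = 1, and let x, z ∈ ℝ^n. For each i ∈ I let s_i ∈ ℝ^n satisfy the cutter inequality ⟨s_i, z − x⟩ ≥ ‖s_i‖². Let g ∈ ℝ^n, g ≠ 0, ĝ = g/‖g‖, and suppose ⟨ĝ, s_i⟩ ≤ 0 for all i ∈ I and ⟨ĝ, z − x⟩ ≥ 0. Set p = Σ_i w_i·s_i, p̂ = p/‖p‖, and suppose ‖p‖ ≥ ρ and ⟨p̂, ĝ⟩ = −1 + ε with 0 < ε < ε̃. Define d = p − ⟨p, ĝ⟩·ĝ and x^{SC} = x + (‖p‖²/‖d‖²)·d, and suppose ‖x^{SC} − z‖ ≤ D. Then the optimally-stepped heavy ball iterate x^{HB} = x + √(1 − ε/2)·(‖p‖/√(2ε − ε²))·(p̂ + ĝ)/√(2ε) satisfies ‖x^{HB} − z‖² < ‖x − z‖² − Σ_i w_i·‖s_i‖². -/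

import Mathlib

open scoped RealInnerProductSpace

set_option maxHeartbeats 1000000 in
/-- acceleration by the heavy ball perturbation: for every
`ρ > 0` and `D ≥ 0` there is a threshold `ε̃ ∈ (0, 1/2]` such that whenever the
zigzag angle condition `⟪p̂, ĝ⟫ = -1 + ε` holds with `0 < ε < ε̃`, `‖p‖ ≥ ρ`, the
cutter and half-space hypotheses hold, and the surrogate constraint target
satisfies `‖x^SC - z‖ ≤ D`, the optimally-stepped heavy ball iterate
`x^HB = x + √(1 - ε/2)·(‖p‖/√(2ε - ε²))·(p̂ + ĝ)/√(2ε)` satisfies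
`‖x^HB - z‖² < ‖x - z‖² - ∑ i, w i ‖s i‖²`. -/
theorem heavy_ball_acceleration :
    ∀ ρ D : ℝ, 0 < ρ → 0 ≤ D →
      ∃ εtilde : ℝ, 0 < εtilde ∧ εtilde ≤ 1 / 2 ∧
        ∀ (n : ℕ) (ι : Type) [Fintype ι] [Nonempty ι] (w : ι → ℝ),
          (∀ i, 0 < w i) → (∑ i, w i) = 1 →
          ∀ (x z : EuclideanSpace ℝ (Fin n)) (s : ι → EuclideanSpace ℝ (Fin n)),
            (∀ i, ⟪s i, z - x⟫ ≥ ‖s i‖ ^ 2) →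
            ∀ g : EuclideanSpace ℝ (Fin n), g ≠ 0 →
              ∀ ghat : EuclideanSpace ℝ (Fin n), ghat = ‖g‖⁻¹ • g →
                (∀ i, ⟪ghat, s i⟫ ≤ 0) → 0 ≤ ⟪ghat, z - x⟫ →
                ∀ p : EuclideanSpace ℝ (Fin n), p = ∑ i, w i • s i → ρ ≤ ‖p‖ →
                  ∀ phat : EuclideanSpace ℝ (Fin n), phat = ‖p‖⁻¹ • p →
                    ∀ ε : ℝ, 0 < ε → ε < εtilde → ⟪phat, ghat⟫ = -1 + ε →
                      ∀ d : EuclideanSpace ℝ (Fin n), d = p - ⟪p, ghat⟫ • ghat →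
                        ∀ xSC : EuclideanSpace ℝ (Fin n),
                          xSC = x + (‖p‖ ^ 2 / ‖d‖ ^ 2) • d → ‖xSC - z‖ ≤ D →
                          ∀ xHB : EuclideanSpace ℝ (Fin n),
                            xHB = x + (Real.sqrt (1 - ε / 2) *
                              (‖p‖ / Real.sqrt (2 * ε - ε ^ 2)) /
                                Real.sqrt (2 * ε)) • (phat + ghat) →
                            ‖xHB - z‖ ^ 2 <
                              ‖x - z‖ ^ 2 - ∑ i, w i * ‖s i‖ ^ 2 := by
  intro ρ D hρ hD
  refine ⟨1/2, by norm_num, le_refl _, ?_⟩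
  intro n ι _ _ w hw hw1 x z s hcut g hg ghat hghat hgs hgv p hp hρp phat hphat
    ε hε hεlt hpg d hd xSC hxSC hxSCD xHB hxHB
  have hp0 : (0:ℝ) < ‖p‖ := lt_of_lt_of_le hρ hρp
  set v := z - x with hv
  set S := ∑ i, w i * ‖s i‖ ^ 2 with hS
  have hpv : ⟪p, v⟫ = ∑ i, w i * ⟪s i, v⟫ := by
    rw [hp, sum_inner]
    exact Finset.sum_congr rfl fun i _ => real_inner_smul_left (s i) v (w i)
  have hSpv : S ≤ ⟪p, v⟫ := by
    rw [hpv, hS]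
    apply Finset.sum_le_sum
    intro i _
    exact mul_le_mul_of_nonneg_left (hcut i) (hw i).le
  have hm1 : ‖p‖ ≤ ∑ i, w i * ‖s i‖ := by
    rw [hp]
    calc ‖∑ i, w i • s i‖ ≤ ∑ i, ‖w i • s i‖ := norm_sum_le _ _
      _ = ∑ i, w i * ‖s i‖ := by
          apply Finset.sum_congr rfl
          intro i _
          rw [norm_smul, Real.norm_eq_abs, abs_of_pos (hw i)]
  have hm2 : (∑ i, w i * ‖s i‖) ^ 2 ≤ S := by
    have h := Finset.sum_mul_sq_le_sq_mul_sq Finset.univ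
      (fun i => Real.sqrt (w i)) (fun i => Real.sqrt (w i) * ‖s i‖)
    have e1 : ∀ i : ι, Real.sqrt (w i) * (Real.sqrt (w i) * ‖s i‖) = w i * ‖s i‖ := by
      intro i; rw [← mul_assoc, Real.mul_self_sqrt (hw i).le]
    have e2 : ∀ i : ι, Real.sqrt (w i) ^ 2 = w i := fun i => Real.sq_sqrt (hw i).le
    have e3 : ∀ i : ι, (Real.sqrt (w i) * ‖s i‖) ^ 2 = w i * ‖s i‖ ^ 2 := by
      intro i; rw [mul_pow, e2]
    simp only [e1, e2, e3, hw1, one_mul] at h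
    exact h
  have hmS : ‖p‖ ^ 2 ≤ S :=
    le_trans (by exact pow_le_pow_left₀ hp0.le hm1 2) hm2
  have hS0 : (0:ℝ) < S := lt_of_lt_of_le (pow_pos hp0 2) hmS
  have hnp : ‖phat‖ = 1 := by
    rw [hphat, norm_smul, norm_inv, norm_norm, inv_mul_cancel₀ hp0.ne']
  have hg0 : (0:ℝ) < ‖g‖ := norm_pos_iff.mpr hg
  have hng : ‖ghat‖ = 1 := by
    rw [hghat, norm_smul, norm_inv, norm_norm, inv_mul_cancel₀ hg0.ne']
  have hu2 : ‖phat + ghat‖ ^ 2 = 2 * ε := by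
    rw [norm_add_sq_real, hnp, hng, hpg]; ring
  have hipv : ⟪phat, v⟫ = ‖p‖⁻¹ * ⟪p, v⟫ := by
    rw [hphat, real_inner_smul_left]
  have hε2 : (0:ℝ) < 2 * ε := by linarith
  have hε3 : (0:ℝ) < 1 - ε / 2 := by linarith
  have ha : (0:ℝ) < Real.sqrt (2 * ε) := Real.sqrt_pos.mpr hε2
  have hb : (0:ℝ) < Real.sqrt (1 - ε / 2) := Real.sqrt_pos.mpr hε3
  have haa : Real.sqrt (2 * ε) * Real.sqrt (2 * ε) = 2 * ε := Real.mul_self_sqrt hε2.le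
  have hcoef : Real.sqrt (1 - ε / 2) * (‖p‖ / Real.sqrt (2 * ε - ε ^ 2)) /
      Real.sqrt (2 * ε) = ‖p‖ / (2 * ε) := by
    rw [show 2 * ε - ε ^ 2 = (2 * ε) * (1 - ε / 2) by ring, Real.sqrt_mul hε2.le]
    set a := Real.sqrt (2 * ε) with hA
    set b := Real.sqrt (1 - ε / 2) with hB
    rw [← haa]
    field_simp
  have hexp : ‖xHB - z‖ ^ 2 = ‖x - z‖ ^ 2 -
      2 * (‖p‖ / (2 * ε)) * (⟪phat, v⟫ + ⟪ghat, v⟫) + (‖p‖ / (2 * ε)) ^ 2 * (2 * ε) := by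
    have h1 : xHB - z = (x - z) + (‖p‖ / (2 * ε)) • (phat + ghat) := by
      rw [hxHB, hcoef]; abel
    rw [h1, norm_add_sq_real, norm_smul, Real.norm_eq_abs, mul_pow, sq_abs, hu2, real_inner_smul_right]
    have h2 : ⟪x - z, phat + ghat⟫ = -(⟪phat, v⟫ + ⟪ghat, v⟫) := by
      rw [show x - z = -v by rw [hv]; abel, inner_neg_left, inner_add_right,
        real_inner_comm v phat, real_inner_comm v ghat]
    rw [h2]; ring
  have key : S < 2 * (‖p‖ / (2 * ε)) * (⟪phat, v⟫ + ⟪ghat, v⟫) -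
      (‖p‖ / (2 * ε)) ^ 2 * (2 * ε) := by
    rw [hipv]
    have heq : 2 * (‖p‖ / (2 * ε)) * (‖p‖⁻¹ * ⟪p, v⟫ + ⟪ghat, v⟫) -
        (‖p‖ / (2 * ε)) ^ 2 * (2 * ε)
        = (2 * ⟪p, v⟫ + 2 * ‖p‖ * ⟪ghat, v⟫ - ‖p‖ ^ 2) / (2 * ε) := by
      field_simp
    rw [heq, lt_div_iff₀ hε2]
    nlinarith [mul_nonneg hp0.le hgv, mul_pos hS0 (show (0:ℝ) < 1 - 2 * ε by linarith)]
  rw [hexp]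
  linarith
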